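/- Let C be a nonempty closed convex subset of a real Hilbert space H. Let f1, f2 : C × C → ℝ be bifunctions satisfying (A1)–(A4) and let T1, …, Td : C → C be continuous quasi-nonexpansive mappings. Assume F := [⋂_{j=1}^d F(Tj)] ∩ [⋂_{k=1}^2 EP(fk)] ≠ ∅. Define: x_0 ∈ C_0 = C arbitrary; y_n = α_n x_n + (1−α_n) T_{n+1} x_n; u_n, v_n ∈ C with f1(u_n, y) + (1/r_n)⟨y − u_n, u_n − y_n⟩ ≥ 0 for all y ∈ C and f2(v_n, y) + (1/r_n)⟨y − v_n, v_n − y_n⟩ ≥ 0 for all y ∈ C; w_n = β u_n + (1−β) v_n; C_{n+1} = {z ∈ C_n : ‖z − w_n‖ ≤ ‖z − x_n‖}; x_{n+1} = P_{C_{n+1}}(x_0), where the index of T cycles modulo d, {r_n} ⊂ [c₁, ∞) for some c₁ > 0, β ∈ (0,1), and α_n ∈ (0,1) with liminf α_n(1 − α_n) > 0. Then {x_n} converges strongly to a point of F. -/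

import Mathlib

open Filter Topology RealInnerProductSpace

noncomputable section

variable {H : Type*} [NormedAddCommGroup H] [InnerProductSpace ℝ H]

/-- `P` is the metric (nearest-point) projection onto nonempty closed convex sets. -/
def IsMetricProjection (P : Set H → H → H) : Prop :=
  ∀ K : Set H, K.Nonempty → IsClosed K → Convex ℝ K → ∀ y,
    P K y ∈ K ∧ ∀ z ∈ K, ‖P K y - y‖ ≤ ‖z - y‖

/-- Quasi-nonexpansive mapping: `F(T) ≠ ∅` and `‖Tx − p‖ ≤ ‖x − p‖` for `p ∈ F(T)`. -/
def QuasiNonexpansive (C : Set H) (T : H → H) : Prop :=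
  (∃ p ∈ C, T p = p) ∧ ∀ p ∈ C, T p = p → ∀ x ∈ C, ‖T x - p‖ ≤ ‖x - p‖

/-- Monotone mapping on `C`. -/
def MonotoneMapOn (C : Set H) (B : H → H) : Prop :=
  ∀ x ∈ C, ∀ y ∈ C, 0 ≤ ⟪x - y, B x - B y⟫

/-- `γ`-inverse strongly monotone mapping on `C`. -/
def InvStronglyMonotoneOn (C : Set H) (γ : ℝ) (A : H → H) : Prop :=
  ∀ x ∈ C, ∀ y ∈ C, γ * ‖A x - A y‖ ^ 2 ≤ ⟪x - y, A x - A y⟫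

/-- Conditions (A1)–(A4) on a bifunction `f : C × C → ℝ`. -/
def BifunConds (C : Set H) (f : H → H → ℝ) : Prop :=
  (∀ x ∈ C, f x x = 0) ∧
    (∀ x ∈ C, ∀ y ∈ C, f x y + f y x ≤ 0) ∧
    (∀ x ∈ C, ∀ y ∈ C, ∀ z ∈ C,
      Filter.limsup (fun t : ℝ => f (t • z + (1 - t) • x) y) (𝓝[>] (0 : ℝ)) ≤ f x y) ∧
    (∀ x ∈ C, ConvexOn ℝ C (f x) ∧ LowerSemicontinuousOn (f x) C)

/-- Solution set of the generalized equilibrium problem `GEP(f, B)`. -/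
def GEPset (C : Set H) (f : H → H → ℝ) (B : H → H) : Set H :=
  {u ∈ C | ∀ v ∈ C, 0 ≤ f u v + ⟪B u, v - u⟫}

/-- Solution set of the equilibrium problem `EP(f)`. -/
def EPset (C : Set H) (f : H → H → ℝ) : Set H :=
  {u ∈ C | ∀ v ∈ C, 0 ≤ f u v}

/-- Solution set of the variational inequality `VI(B, C)`. -/
def VIset (C : Set H) (B : H → H) : Set H :=
  {u ∈ C | ∀ v ∈ C, 0 ≤ ⟪B u, v - u⟫}



/-- convex-combination norm-square identity -/
lemma st8_combo_sq (a b : H) (t : ℝ) :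
    ‖t•a + (1-t)•b‖^2 = t*‖a‖^2 + (1-t)*‖b‖^2 - t*(1-t)*‖a-b‖^2 := by
  have h : ∀ z : H, ‖z‖^2 = ⟪z,z⟫ := fun z => (real_inner_self_eq_norm_sq z).symm
  rw [h, h, h, h]
  simp only [inner_add_add_self, inner_sub_sub_self, real_inner_smul_left,
    real_inner_smul_right, real_inner_comm b a]
  ring

/-- resolvent-type firm inequality -/
lemma st8_resolvent {C : Set H} {f : H → H → ℝ}
    (hA2 : ∀ x ∈ C, ∀ y ∈ C, f x y + f y x ≤ 0)
    {p u yn : H} {r : ℝ} (hr : 0 < r) (hpC : p ∈ C)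
    (hpEP : ∀ z ∈ C, 0 ≤ f p z) (huC : u ∈ C)
    (hres : ∀ yy ∈ C, 0 ≤ f u yy + (1/r) * ⟪yy - u, u - yn⟫) :
    ‖u - p‖^2 + ‖u - yn‖^2 ≤ ‖yn - p‖^2 := by
  have h1 := hres p hpC
  have h2 := hA2 u huC p hpC
  have h3 := hpEP u huC
  have hip : 0 ≤ ⟪p - u, u - yn⟫ := by
    by_contra hip
    push_neg at hip
    have : (1/r) * ⟪p - u, u - yn⟫ < 0 :=
      mul_neg_of_pos_of_neg (one_div_pos.mpr hr) hip
    linarith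
  have hexp : ‖yn - p‖^2 = ‖yn - u‖^2 + 2*⟪yn - u, u - p⟫ + ‖u - p‖^2 := by
    rw [show yn - p = (yn - u) + (u - p) by abel, @norm_add_sq_real]
  have hinn : ⟪yn - u, u - p⟫ = ⟪p - u, u - yn⟫ := by
    rw [show yn - u = -(u - yn) by abel, show (u:H) - p = -(p - u) by abel,
      inner_neg_neg, real_inner_comm]
  have hnrm : ‖u - yn‖ = ‖yn - u‖ := norm_sub_rev _ _
  rw [hexp, hinn, hnrm]
  nlinarith

/-- projection characterization inequality -/
lemma st8_proj_ineq {K : Set H} (hK : Convex ℝ K) {q x0 : H} (hq : q ∈ K)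
    (hmin : ∀ z ∈ K, ‖q - x0‖ ≤ ‖z - x0‖) :
    ∀ z ∈ K, ‖z - q‖^2 + ‖q - x0‖^2 ≤ ‖z - x0‖^2 := by
  intro z hz
  have hchar : ⟪x0 - q, z - q⟫ ≤ 0 := by
    set c := ⟪x0 - q, z - q⟫ with hc
    set s := ‖z - q‖^2 with hs
    have hkey : ∀ t : ℝ, 0 < t → t ≤ 1 → 0 ≤ -2*t*c + t^2*s := by
      intro t ht0 ht1
      have hmem : q + t•(z - q) ∈ K := by
        have := hK hq hz (by linarith : (0:ℝ) ≤ 1 - t) (le_of_lt ht0) (by ring)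
        have he : (1-t)•q + t•z = q + t•(z - q) := by
          rw [smul_sub]; module
        rwa [he] at this
      have h1 := hmin _ hmem
      have h2 : ‖q + t•(z - q) - x0‖^2 = ‖q - x0‖^2 + 2*t*(-c) + t^2*s := by
        rw [show q + t•(z-q) - x0 = (q - x0) + t•(z - q) by abel, @norm_add_sq_real,
          real_inner_smul_right, norm_smul]
        have : ⟪q - x0, z - q⟫ = -c := by
          rw [hc, show x0 - q = -(q - x0) by abel, inner_neg_left]; ring
        rw [this]
        have : ‖t‖ = t := abs_of_pos ht0
        rw [this, hs]; ring
      have h3 : ‖q - x0‖^2 ≤ ‖q + t•(z - q) - x0‖^2 :=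
        pow_le_pow_left₀ (norm_nonneg _) (h1) 2
      rw [h2] at h3; nlinarith
    by_contra hcpos
    push_neg at hcpos
    have hspos : 0 < s := by
      have := hkey 1 one_pos le_rfl
      nlinarith
    have := hkey (min 1 (c/s)) (lt_min one_pos (div_pos hcpos hspos)) (min_le_left _ _)
    have hts : (min 1 (c/s)) * s ≤ c := by
      calc (min 1 (c/s)) * s ≤ (c/s) * s := by
            apply mul_le_mul_of_nonneg_right (min_le_right _ _) (le_of_lt hspos)
        _ = c := by field_simp
    set t := min 1 (c/s) with htd
    have ht0 : 0 < t := lt_min one_pos (div_pos hcpos hspos)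
    nlinarith
  have e : z - x0 = (z - q) + (q - x0) := by abel
  rw [e, @norm_add_sq_real]
  have : ⟪z - q, q - x0⟫ = -⟪x0 - q, z - q⟫ := by
    rw [real_inner_comm, show q - x0 = -(x0 - q) by abel, inner_neg_left]
  nlinarith
set_option maxHeartbeats 1600000

/-- Corollary 6: strong convergence of the hybrid scheme (44) in a real Hilbert space. -/
theorem statement_8
    {H : Type*} [NormedAddCommGroup H] [InnerProductSpace ℝ H] [CompleteSpace H]
    (P : Set H → H → H) (hP : IsMetricProjection P)
    (C : Set H) (hCne : C.Nonempty) (hCcl : IsClosed C) (hCcv : Convex ℝ C)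
    (f1 f2 : H → H → ℝ) (hf1 : BifunConds C f1) (hf2 : BifunConds C f2)
    (d : ℕ) (hd : 0 < d)
    (T : Fin d → H → H) (hTmaps : ∀ j, Set.MapsTo (T j) C C)
    (hTcont : ∀ j, ContinuousOn (T j) C)
    (hTqne : ∀ j, QuasiNonexpansive C (T j))
    (F : Set H)
    (hF : F = (⋂ j, {p ∈ C | T j p = p}) ∩ (EPset C f1 ∩ EPset C f2))
    (hFne : F.Nonempty)
    (c₁ β : ℝ) (hc₁ : 0 < c₁) (hβ : β ∈ Set.Ioo (0 : ℝ) 1)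
    (α r : ℕ → ℝ)
    (hα : ∀ n, α n ∈ Set.Ioo (0 : ℝ) 1)
    (hliminf : 0 < Filter.liminf (fun n => α n * (1 - α n)) atTop)
    (hr : ∀ n, c₁ ≤ r n)
    (x y u v w : ℕ → H) (Cs : ℕ → Set H)
    (hC0 : Cs 0 = C) (hx0 : x 0 ∈ C)
    (hy : ∀ n, y n = α n • x n + (1 - α n) • T ⟨(n + 1) % d, Nat.mod_lt _ hd⟩ (x n))
    (hu : ∀ n, u n ∈ C ∧ ∀ yy ∈ C,
      0 ≤ f1 (u n) yy + (1 / r n) * ⟪yy - u n, u n - y n⟫)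
    (hv : ∀ n, v n ∈ C ∧ ∀ yy ∈ C,
      0 ≤ f2 (v n) yy + (1 / r n) * ⟪yy - v n, v n - y n⟫)
    (hw : ∀ n, w n = β • u n + (1 - β) • v n)
    (hCs : ∀ n, Cs (n + 1) = {zz ∈ Cs n | ‖zz - w n‖ ≤ ‖zz - x n‖})
    (hx : ∀ n, x (n + 1) = P (Cs (n + 1)) (x 0)) :
    ∃ p ∈ F, Tendsto x atTop (𝓝 p) := by
  obtain ⟨p₀, hp₀F⟩ := hFne
  -- unpack membership in F
  have hFmem : ∀ p ∈ F, p ∈ C ∧ (∀ j, T j p = p) ∧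
      (∀ z ∈ C, 0 ≤ f1 p z) ∧ (∀ z ∈ C, 0 ≤ f2 p z) := by
    intro p hp
    rw [hF] at hp
    obtain ⟨hp1, hp2, hp3⟩ := hp
    exact ⟨hp2.1, fun j => (Set.mem_iInter.mp hp1 j).2, hp2.2, hp3.2⟩
  have hrpos : ∀ n, 0 < r n := fun n => lt_of_lt_of_le hc₁ (hr n)
  -- the key inequality
  have hkey : ∀ n, x n ∈ C → ∀ p ∈ F,
      β*‖u n - y n‖^2 + (1-β)*‖v n - y n‖^2
        + (α n)*(1-α n)*‖x n - T ⟨(n + 1) % d, Nat.mod_lt _ hd⟩ (x n)‖^2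
      ≤ ‖x n - p‖^2 - ‖w n - p‖^2 := by
    intro n hxnC p hpF
    obtain ⟨hpC, hpfix, hpEP1, hpEP2⟩ := hFmem p hpF
    set j : Fin d := ⟨(n + 1) % d, Nat.mod_lt _ hd⟩ with hj
    -- h1 : firm inequality for u
    have h1 : ‖u n - p‖^2 + ‖u n - y n‖^2 ≤ ‖y n - p‖^2 :=
      st8_resolvent hf1.2.1 (hrpos n) hpC hpEP1 (hu n).1 (hu n).2
    have h2 : ‖v n - p‖^2 + ‖v n - y n‖^2 ≤ ‖y n - p‖^2 :=
      st8_resolvent hf2.2.1 (hrpos n) hpC hpEP2 (hv n).1 (hv n).2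
    -- h3 : quasi-nonexpansiveness step
    have h3 : ‖y n - p‖^2 ≤ ‖x n - p‖^2 - (α n)*(1-α n)*‖x n - T j (x n)‖^2 := by
      have he : y n - p = (α n)•(x n - p) + (1 - α n)•(T j (x n) - p) := by
        rw [hy n, smul_sub, smul_sub]; module
      have hq := (hTqne j).2 p hpC (hpfix j) (x n) hxnC
      have hcs := st8_combo_sq (x n - p) (T j (x n) - p) (α n)
      rw [show (x n - p) - (T j (x n) - p) = x n - T j (x n) by abel] at hcs
      rw [he, hcs]
      have hα1 := (hα n).1
      have hα2 := (hα n).2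
      nlinarith [pow_le_pow_left₀ (norm_nonneg (T j (x n) - p)) hq 2]
    -- h4 : convexity of w
    have h4 : ‖w n - p‖^2 ≤ β*‖u n - p‖^2 + (1-β)*‖v n - p‖^2 := by
      have he : w n - p = β•(u n - p) + (1 - β)•(v n - p) := by
        rw [hw n, smul_sub, smul_sub]; module
      rw [he, st8_combo_sq]
      nlinarith [sq_nonneg ‖u n - v n‖, hβ.1, hβ.2,
        mul_nonneg (mul_nonneg (le_of_lt hβ.1) (by linarith [hβ.2] : (0:ℝ) ≤ 1 - β)) (sq_nonneg ‖(u n - p) - (v n - p)‖)]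
    have hβ1 := hβ.1
    have hβ2 := hβ.2
    nlinarith
  -- the invariant
  have hInv : ∀ n, (IsClosed (Cs n) ∧ Convex ℝ (Cs n)) ∧ Cs n ⊆ C ∧ F ⊆ Cs n ∧ x n ∈ Cs n := by
    intro n
    induction n with
    | zero =>
      rw [hC0]
      exact ⟨⟨hCcl, hCcv⟩, le_refl _, fun p hp => (hFmem p hp).1, hx0⟩
    | succ n ih =>
      obtain ⟨⟨hcl, hcv⟩, hsub, hFsub, hxn⟩ := ih
      have hxnC : x n ∈ C := hsub hxn
      -- halfspace description
      have hset : Cs (n+1) = Cs n ∩ {z | ⟪x n - w n, z⟫ ≤ (‖x n‖^2 - ‖w n‖^2)/2} := by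
        rw [hCs n]
        ext z
        simp only [Set.mem_setOf_eq, Set.mem_inter_iff, Set.mem_sep_iff]
        refine and_congr_right fun _ => ?_
        have e1 : ‖z - w n‖^2 = ‖z‖^2 - 2*⟪z, w n⟫ + ‖w n‖^2 := by rw [@norm_sub_sq_real]
        have e2 : ‖z - x n‖^2 = ‖z‖^2 - 2*⟪z, x n⟫ + ‖x n‖^2 := by rw [@norm_sub_sq_real]
        have e3 : ⟪x n - w n, z⟫ = ⟪z, x n⟫ - ⟪z, w n⟫ := by
          rw [inner_sub_left, real_inner_comm (x n) z, real_inner_comm (w n) z]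
        constructor
        · intro h
          have := pow_le_pow_left₀ (norm_nonneg _) h 2
          rw [e1, e2] at this; rw [e3]; linarith
        · intro h
          have h2 : ‖z - w n‖^2 ≤ ‖z - x n‖^2 := by rw [e1, e2]; rw [e3] at h; linarith
          exact le_of_pow_le_pow_left₀ two_ne_zero (norm_nonneg _) h2
      have hcl' : IsClosed (Cs (n+1)) := by
        rw [hset]
        exact hcl.inter (isClosed_le (innerSL ℝ (x n - w n)).continuous continuous_const)
      have hcv' : Convex ℝ (Cs (n+1)) := by
        rw [hset]
        exact hcv.inter (convex_halfSpace_le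
          ⟨fun a b => inner_add_right _ a b, fun c' a => real_inner_smul_right _ a c'⟩ _)
      have hFsub' : F ⊆ Cs (n+1) := by
        intro p hp
        rw [hCs n]
        refine ⟨hFsub hp, ?_⟩
        have hk := hkey n hxnC p hp
        have hα1 := (hα n).1
        have hα2 := (hα n).2
        have hn1 : 0 ≤ β*‖u n - y n‖^2 := mul_nonneg (le_of_lt hβ.1) (sq_nonneg _)
        have hn2 : 0 ≤ (1-β)*‖v n - y n‖^2 :=
          mul_nonneg (by linarith [hβ.2]) (sq_nonneg _)
        have hn3 : 0 ≤ (α n)*(1-α n)*‖x n - T ⟨(n + 1) % d, Nat.mod_lt _ hd⟩ (x n)‖^2 :=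
          mul_nonneg (mul_nonneg (le_of_lt hα1) (by linarith)) (sq_nonneg _)
        have hsq : ‖p - w n‖^2 ≤ ‖p - x n‖^2 := by
          rw [norm_sub_rev p (w n), norm_sub_rev p (x n)]; linarith
        exact le_of_pow_le_pow_left₀ two_ne_zero (norm_nonneg _) hsq
      have hne' : (Cs (n+1)).Nonempty := ⟨p₀, hFsub' hp₀F⟩
      have hxn1 : x (n+1) ∈ Cs (n+1) := by
        rw [hx n]; exact (hP _ hne' hcl' hcv' (x 0)).1
      exact ⟨⟨hcl', hcv'⟩, fun z hz => hsub ((hset ▸ hz).1), hFsub', hxn1⟩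
  have hxC : ∀ n, x n ∈ C := fun n => (hInv n).2.1 (hInv n).2.2.2
  have hFsub : ∀ n, F ⊆ Cs n := fun n => (hInv n).2.2.1
  have hCne' : ∀ n, (Cs n).Nonempty := fun n => ⟨p₀, hFsub n hp₀F⟩
  have hmono : ∀ n m, n ≤ m → Cs m ⊆ Cs n := by
    intro n m hnm
    induction hnm with
    | refl => exact le_refl _
    | step h ih => exact le_trans (by rw [hCs]; exact fun z hz => hz.1) ih
  -- projection properties of x (n+1)
  have hPmem : ∀ n, x (n+1) ∈ Cs (n+1) := fun n => (hInv (n+1)).2.2.2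
  have hPmin : ∀ n, ∀ z ∈ Cs (n+1), ‖x (n+1) - x 0‖ ≤ ‖z - x 0‖ := by
    intro n z hz
    rw [hx n]
    exact (hP _ (hCne' (n+1)) (hInv (n+1)).1.1 (hInv (n+1)).1.2 (x 0)).2 z hz
  have hproj : ∀ n, ∀ z ∈ Cs (n+1),
      ‖z - x (n+1)‖^2 + ‖x (n+1) - x 0‖^2 ≤ ‖z - x 0‖^2 :=
    fun n => st8_proj_ineq (hInv (n+1)).1.2 (hPmem n) (hPmin n)
  -- the sequence a
  set a : ℕ → ℝ := fun n => ‖x (n+1) - x 0‖^2 with ha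
  have hstep : ∀ n m, n ≤ m → ‖x (m+1) - x (n+1)‖^2 + a n ≤ a m := by
    intro n m hnm
    exact hproj n (x (m+1)) (hmono (n+1) (m+1) (by omega) (hPmem m))
  have hamono : Monotone a := by
    intro n m hnm
    have := hstep n m hnm
    nlinarith [sq_nonneg ‖x (m+1) - x (n+1)‖]
  have habd : ∀ n, a n ≤ ‖p₀ - x 0‖^2 := by
    intro n
    have := hPmin n p₀ (hFsub (n+1) hp₀F)
    exact pow_le_pow_left₀ (norm_nonneg _) this 2
  have hbdd : BddAbove (Set.range a) := ⟨‖p₀ - x 0‖^2, by rintro _ ⟨n, rfl⟩; exact habd n⟩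
  set L : ℝ := ⨆ n, a n with hL
  have haL : Tendsto a atTop (𝓝 L) := tendsto_atTop_ciSup hamono hbdd
  have haleL : ∀ n, a n ≤ L := fun n => le_ciSup hbdd n
  -- Cauchy
  have hcauchy : CauchySeq (fun n => x (n+1)) := by
    apply cauchySeq_of_le_tendsto_0 (fun n => Real.sqrt (L - a n))
    · intro n m N hn hm
      rcases le_total n m with h | h
      · rw [dist_eq_norm]
        have h1 := hstep n m h
        have : ‖x (n+1) - x (m+1)‖^2 ≤ L - a n := by
          rw [norm_sub_rev]; nlinarith [haleL m]
        calc ‖x (n+1) - x (m+1)‖ = Real.sqrt (‖x (n+1) - x (m+1)‖^2) :=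
              (Real.sqrt_sq (norm_nonneg _)).symm
          _ ≤ Real.sqrt (L - a n) := Real.sqrt_le_sqrt this
          _ ≤ Real.sqrt (L - a N) := Real.sqrt_le_sqrt (by linarith [hamono hn])
      · rw [dist_eq_norm, norm_sub_rev]
        have h1 := hstep m n h
        have : ‖x (m+1) - x (n+1)‖^2 ≤ L - a m := by
          rw [norm_sub_rev]; nlinarith [haleL n]
        calc ‖x (m+1) - x (n+1)‖ = Real.sqrt (‖x (m+1) - x (n+1)‖^2) :=
              (Real.sqrt_sq (norm_nonneg _)).symm
          _ ≤ Real.sqrt (L - a m) := Real.sqrt_le_sqrt this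
          _ ≤ Real.sqrt (L - a N) := Real.sqrt_le_sqrt (by linarith [hamono hm])
    · have : Tendsto (fun n => L - a n) atTop (𝓝 0) := by
        have := (tendsto_const_nhds : Tendsto (fun _ : ℕ => L) atTop (𝓝 L)).sub haL
        simpa using this
      simpa using this.sqrt
  obtain ⟨q, hq'⟩ := cauchySeq_tendsto_of_complete hcauchy
  have hq : Tendsto x atTop (𝓝 q) := (tendsto_add_atTop_iff_nat 1).mp hq'
  have hqC : q ∈ C := hCcl.mem_of_tendsto hq (Filter.Eventually.of_forall hxC)
  -- a small helper: norm-squared tends to zero implies tends to zero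
  have hsqz : ∀ z : ℕ → H, Tendsto (fun n => ‖z n‖^2) atTop (𝓝 0) →
      Tendsto z atTop (𝓝 0) := by
    intro z hz
    apply tendsto_zero_iff_norm_tendsto_zero.mpr
    have heq : (fun n => Real.sqrt (‖z n‖^2)) = fun n => ‖z n‖ :=
      funext fun n => Real.sqrt_sq (norm_nonneg _)
    rw [← heq]
    simpa using hz.sqrt
  have hΔ : Tendsto (fun n => x (n+1) - x n) atTop (𝓝 0) := by
    have := hq'.sub hq; simpa using this
  have hwx1 : ∀ n, ‖w n - x (n+1)‖ ≤ ‖x (n+1) - x n‖ := by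
    intro n
    have h1 := hPmem n
    rw [hCs n] at h1
    rw [norm_sub_rev]
    exact h1.2
  have hwq : Tendsto w atTop (𝓝 q) := by
    have h0 : Tendsto (fun n => w n - x (n+1)) atTop (𝓝 0) :=
      tendsto_zero_iff_norm_tendsto_zero.mpr
        (squeeze_zero (fun n => norm_nonneg _) hwx1 (by simpa using hΔ.norm))
    have := h0.add hq'
    simpa using this
  -- s → 0
  have hs : Tendsto (fun n => ‖x n - p₀‖^2 - ‖w n - p₀‖^2) atTop (𝓝 0) := by
    have h1 : Tendsto (fun n => ‖x n - p₀‖^2) atTop (𝓝 (‖q - p₀‖^2)) :=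
      ((hq.sub tendsto_const_nhds).norm).pow 2
    have h2 : Tendsto (fun n => ‖w n - p₀‖^2) atTop (𝓝 (‖q - p₀‖^2)) :=
      ((hwq.sub tendsto_const_nhds).norm).pow 2
    have := h1.sub h2; simpa using this
  have hkey' := fun n => hkey n (hxC n) p₀ hp₀F
  have hn1 : ∀ n, 0 ≤ β*‖u n - y n‖^2 :=
    fun n => mul_nonneg (le_of_lt hβ.1) (sq_nonneg _)
  have hn2 : ∀ n, 0 ≤ (1-β)*‖v n - y n‖^2 :=
    fun n => mul_nonneg (by linarith [hβ.2]) (sq_nonneg _)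
  have hn3 : ∀ n, 0 ≤ (α n)*(1-α n)*‖x n - T ⟨(n + 1) % d, Nat.mod_lt _ hd⟩ (x n)‖^2 :=
    fun n => mul_nonneg (mul_nonneg (le_of_lt (hα n).1) (by linarith [(hα n).2])) (sq_nonneg _)
  -- u - y → 0, v - y → 0
  have huy2 : Tendsto (fun n => ‖u n - y n‖^2) atTop (𝓝 0) := by
    apply squeeze_zero (fun n => sq_nonneg _)
      (g := fun n => (‖x n - p₀‖^2 - ‖w n - p₀‖^2)/β)
    · intro n
      rw [le_div_iff₀ hβ.1]
      have := hkey' n; have := hn2 n; have := hn3 n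
      linarith
    · simpa using hs.div_const β
  have hvy2 : Tendsto (fun n => ‖v n - y n‖^2) atTop (𝓝 0) := by
    apply squeeze_zero (fun n => sq_nonneg _)
      (g := fun n => (‖x n - p₀‖^2 - ‖w n - p₀‖^2)/(1-β))
    · intro n
      rw [le_div_iff₀ (by linarith [hβ.2] : (0:ℝ) < 1 - β)]
      have := hkey' n; have := hn1 n; have := hn3 n
      linarith
    · simpa using hs.div_const (1-β)
  have huy : Tendsto (fun n => u n - y n) atTop (𝓝 0) := hsqz _ huy2
  have hvy : Tendsto (fun n => v n - y n) atTop (𝓝 0) := hsqz _ hvy2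
  -- x - Tx → 0
  have hg : Tendsto (fun n => (α n)*(1-α n)*‖x n - T ⟨(n + 1) % d, Nat.mod_lt _ hd⟩ (x n)‖^2)
      atTop (𝓝 0) := by
    apply squeeze_zero hn3 (g := fun n => ‖x n - p₀‖^2 - ‖w n - p₀‖^2)
    · intro n
      have := hkey' n; have := hn1 n; have := hn2 n
      linarith
    · exact hs
  have hev : ∀ᶠ n in atTop,
      (liminf (fun n => α n * (1 - α n)) atTop)/2 < α n * (1 - α n) :=
    Filter.eventually_lt_of_lt_liminf (half_lt_self hliminf)
      (isBoundedUnder_of ⟨0, fun n =>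
        mul_nonneg (le_of_lt (hα n).1) (by linarith [(hα n).2])⟩)
  have hTx2 : Tendsto (fun n => ‖x n - T ⟨(n + 1) % d, Nat.mod_lt _ hd⟩ (x n)‖^2)
      atTop (𝓝 0) := by
    apply squeeze_zero' (Filter.Eventually.of_forall fun n => sq_nonneg _)
      (g := fun n => ((α n)*(1-α n)*‖x n - T ⟨(n + 1) % d, Nat.mod_lt _ hd⟩ (x n)‖^2) /
        ((liminf (fun n => α n * (1 - α n)) atTop)/2))
    · filter_upwards [hev] with n hn
      rw [le_div_iff₀ (half_pos hliminf)]
      nlinarith [sq_nonneg ‖x n - T ⟨(n + 1) % d, Nat.mod_lt _ hd⟩ (x n)‖]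
    · have := hg.div_const ((liminf (fun n => α n * (1 - α n)) atTop)/2)
      rwa [zero_div] at this
  have hTx : Tendsto (fun n => ‖x n - T ⟨(n + 1) % d, Nat.mod_lt _ hd⟩ (x n)‖)
      atTop (𝓝 0) := by
    have heq : (fun n => Real.sqrt (‖x n - T ⟨(n + 1) % d, Nat.mod_lt _ hd⟩ (x n)‖^2)) =
        fun n => ‖x n - T ⟨(n + 1) % d, Nat.mod_lt _ hd⟩ (x n)‖ :=
      funext fun n => Real.sqrt_sq (norm_nonneg _)
    rw [← heq]
    simpa using hTx2.sqrt
  -- y → q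
  have hyx : Tendsto (fun n => y n - x n) atTop (𝓝 0) := by
    apply tendsto_zero_iff_norm_tendsto_zero.mpr
    apply squeeze_zero (fun n => norm_nonneg _)
      (g := fun n => ‖x n - T ⟨(n + 1) % d, Nat.mod_lt _ hd⟩ (x n)‖) _ hTx
    intro n
    have he : y n - x n = (1 - α n)•(T ⟨(n + 1) % d, Nat.mod_lt _ hd⟩ (x n) - x n) := by
      rw [hy n, smul_sub]; module
    rw [he, norm_smul,
      norm_sub_rev (T ⟨(n + 1) % d, Nat.mod_lt _ hd⟩ (x n)) (x n)]
    have h1 : ‖(1 - α n)‖ ≤ 1 := by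
      rw [Real.norm_eq_abs, abs_of_pos (by linarith [(hα n).2])]
      linarith [(hα n).1]
    nlinarith [norm_nonneg (x n - T ⟨(n + 1) % d, Nat.mod_lt _ hd⟩ (x n))]
  have hyq : Tendsto y atTop (𝓝 q) := by
    have := hyx.add hq; simpa using this
  have huq : Tendsto u atTop (𝓝 q) := by
    have := huy.add hyq; simpa using this
  have hvq : Tendsto v atTop (𝓝 q) := by
    have := hvy.add hyq; simpa using this
  -- fixed points
  have hfix : ∀ j : Fin d, T j q = q := by
    intro j
    set c : ℕ := j.val + (d - 1) with hc
    have heqj : ∀ k : ℕ, (⟨(c + k*d + 1) % d, Nat.mod_lt _ hd⟩ : Fin d) = j := by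
      intro k
      apply Fin.ext
      show (c + k*d + 1) % d = j.val
      have h1 : c + k*d + 1 = j.val + d + k*d := by
        have := j.isLt; omega
      have h2 : j.val + d + k*d = j.val + (1+k)*d := by ring
      rw [h1, h2, Nat.add_mul_mod_self_right, Nat.mod_eq_of_lt j.isLt]
    have hmono' : Tendsto (fun k => c + k*d) atTop atTop :=
      tendsto_atTop_mono (fun k =>
        le_trans (Nat.le_mul_of_pos_right k hd) (Nat.le_add_left _ _)) tendsto_id
    have hxsub : Tendsto (fun k => x (c + k*d)) atTop (𝓝 q) := hq.comp hmono'
    have hnrm : Tendsto (fun k => ‖x (c+k*d) - T j (x (c+k*d))‖) atTop (𝓝 0) := by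
      have h2 : Tendsto (fun k => ‖x (c+k*d) -
          T ⟨(c+k*d+1) % d, Nat.mod_lt _ hd⟩ (x (c+k*d))‖) atTop (𝓝 0) :=
        hTx.comp hmono'
      have hfun : (fun k => ‖x (c+k*d) -
          T ⟨(c+k*d+1) % d, Nat.mod_lt _ hd⟩ (x (c+k*d))‖) =
          fun k => ‖x (c+k*d) - T j (x (c+k*d))‖ := by
        funext k; rw [heqj k]
      rwa [hfun] at h2
    have hTxq : Tendsto (fun k => T j (x (c+k*d))) atTop (𝓝 q) := by
      have h0 := tendsto_zero_iff_norm_tendsto_zero.mpr hnrm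
      have := hxsub.sub h0; simpa using this
    have hwithin : Tendsto (fun k => x (c+k*d)) atTop (𝓝[C] q) :=
      tendsto_nhdsWithin_iff.mpr ⟨hxsub, Filter.Eventually.of_forall fun k => hxC _⟩
    exact tendsto_nhds_unique ((hTcont j q hqC).tendsto.comp hwithin) hTxq
  -- equilibrium points
  have hEP : ∀ f : H → H → ℝ, BifunConds C f → ∀ uu : ℕ → H,
      (∀ n, uu n ∈ C ∧ ∀ yy ∈ C, 0 ≤ f (uu n) yy + (1 / r n) * ⟪yy - uu n, uu n - y n⟫) →
      Tendsto uu atTop (𝓝 q) → ∀ z ∈ C, 0 ≤ f q z := by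
    intro f hf uu huu huuq vv hvvC
    obtain ⟨hA1, hA2, hA3, hA4⟩ := hf
    have huy' : Tendsto (fun n => uu n - y n) atTop (𝓝 0) := by
      have := huuq.sub hyq; simpa using this
    have hclaim : ∀ t : ℝ, t ∈ Set.Ioc (0:ℝ) 1 → 0 ≤ f (t•vv + (1-t)•q) vv := by
      intro t ht
      set zt : H := t•vv + (1-t)•q with hzt
      have hztC : zt ∈ C := hCcv hvvC hqC (le_of_lt ht.1) (by linarith [ht.2]) (by ring)
      -- c_n → 0
      have hcn : Tendsto (fun n => (1/r n) * ⟪zt - uu n, uu n - y n⟫) atTop (𝓝 0) := by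
        have hip : Tendsto (fun n => ⟪zt - uu n, uu n - y n⟫) atTop (𝓝 0) := by
          have := (tendsto_const_nhds : Tendsto (fun _ : ℕ => zt) atTop (𝓝 zt)).sub huuq
          have h2 : Tendsto (fun n => ⟪zt - uu n, uu n - y n⟫) atTop
              (𝓝 (⟪zt - q, (0:H)⟫)) := this.inner huy'
          simpa using h2
        have hbnd : ∀ n, ‖(1/r n) * ⟪zt - uu n, uu n - y n⟫‖ ≤
            (1/c₁) * ‖⟪zt - uu n, uu n - y n⟫‖ := by
          intro n
          rw [norm_mul]
          apply mul_le_mul_of_nonneg_right _ (norm_nonneg _)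
          rw [Real.norm_eq_abs, abs_of_pos (one_div_pos.mpr (hrpos n))]
          exact one_div_le_one_div_of_le hc₁ (hr n)
        have hlim : Tendsto (fun n => (1/c₁) * ‖⟪zt - uu n, uu n - y n⟫‖) atTop (𝓝 0) := by
          simpa using hip.norm.const_mul (1/c₁)
        exact squeeze_zero_norm hbnd hlim
      have hfle : ∀ n, f zt (uu n) ≤ (1/r n) * ⟪zt - uu n, uu n - y n⟫ := by
        intro n
        have h2 := hA2 zt hztC (uu n) (huu n).1
        have h3 := (huu n).2 zt hztC
        linarith
      have hle0 : f zt q ≤ 0 := by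
        by_contra hpos
        push_neg at hpos
        have hlsc := hA4 zt hztC |>.2 q hqC
        have hev2 : ∀ᶠ n in atTop, f zt q / 2 < f zt (uu n) := by
          have huuq' : Tendsto uu atTop (𝓝[C] q) :=
            tendsto_nhdsWithin_iff.mpr ⟨huuq, Filter.Eventually.of_forall fun n => (huu n).1⟩
          exact huuq'.eventually (hlsc (f zt q / 2) (by linarith))
        have hev3 : ∀ᶠ n in atTop, (1/r n) * ⟪zt - uu n, uu n - y n⟫ < f zt q / 2 :=
          hcn.eventually (Filter.Tendsto.eventually_lt_const (by linarith) tendsto_id)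
        obtain ⟨n, h2', h3'⟩ := (hev2.and hev3).exists
        linarith [hfle n]
      have hconv := (hA4 zt hztC).1.2 hvvC hqC (le_of_lt ht.1)
        (by linarith [ht.2] : (0:ℝ) ≤ 1 - t) (by ring)
      have h0 : f zt (t•vv + (1-t)•q) = 0 := hA1 zt hztC
      rw [h0] at hconv
      simp only [smul_eq_mul] at hconv
      have h5 : 0 ≤ t * f zt vv := by
        nlinarith [mul_nonneg (by linarith [ht.2] : (0:ℝ) ≤ 1 - t)
          (by linarith : (0:ℝ) ≤ -(f zt q))]
      exact (mul_nonneg_iff_of_pos_left ht.1).mp h5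
    have h3 := hA3 q hqC vv hvvC vv hvvC
    refine le_trans ?_ h3
    rw [Filter.limsup_eq]
    apply Real.sInf_nonneg
    intro b hb
    simp only [Set.mem_setOf_eq] at hb
    have h4 : ∀ᶠ t in 𝓝[>] (0:ℝ), t ∈ Set.Ioc (0:ℝ) 1 :=
      Ioc_mem_nhdsGT_of_mem ⟨le_refl 0, zero_lt_one⟩
    obtain ⟨t, ht1, ht2⟩ := (hb.and h4).exists
    linarith [hclaim t ht2]
  refine ⟨q, ?_, hq⟩
  rw [hF]
  exact ⟨Set.mem_iInter.mpr fun j => ⟨hqC, hfix j⟩,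
    ⟨hqC, hEP f1 hf1 u hu huq⟩, ⟨hqC, hEP f2 hf2 v hv hvq⟩⟩
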